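/- Every left exact radical functor γ on R-Mod preserves injectivity: if I is an injective R-module, then γ(I) is an injective R-module. -/

import Mathlib

universe u

/-- A preradical functor on `R`-Mod: a subfunctor of the identity functor, given by
a choice of submodule `γ(M) ⊆ M` for every `R`-module `M`, such that every linear map
`f : M → N` restricts to a map `γ(M) → γ(N)` (the action on morphisms being restriction). -/
structure Preradical (R : Type u) [CommRing R] where
  obj : (M : Type u) → [AddCommGroup M] → [Module R M] → Submodule R M
  map_le : ∀ {M N : Type u} [AddCommGroup M] [Module R M] [AddCommGroup N] [Module R N]
    (f : M →ₗ[R] N), (obj M).map f ≤ obj N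

variable {R : Type u} [CommRing R]

/-- A preradical functor is left exact iff it preserves kernels: for every linear map
`f : M → N`, `γ(ker f)` (viewed inside `M`) equals `γ(M) ∩ ker f`. -/
def Preradical.IsLeftExact (γ : Preradical R) : Prop :=
  ∀ {M N : Type u} [AddCommGroup M] [Module R M] [AddCommGroup N] [Module R N]
    (f : M →ₗ[R] N),
      (γ.obj ↥(LinearMap.ker f)).map (LinearMap.ker f).subtype
        = γ.obj M ⊓ LinearMap.ker f

/-- A preradical functor `γ` is a radical functor if `γ(M/γ(M)) = 0` for every module `M`. -/
def Preradical.IsRadical (γ : Preradical R) : Prop :=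
  ∀ (M : Type u) [AddCommGroup M] [Module R M], γ.obj (M ⧸ γ.obj M) = ⊥

/-- A preradical functor preserves injectivity if it sends injective modules to
injective modules. -/
def Preradical.PreservesInjectivity (γ : Preradical R) : Prop :=
  ∀ (M : Type u) [AddCommGroup M] [Module R M],
    Module.Injective R M → Module.Injective R ↥(γ.obj M)

namespace Stab

variable {γ : Preradical R}

/-- The torsion predicate associated to a preradical: `M` is torsion if `γ(M) = M`. -/
def IsT (γ : Preradical R) (M : Type u) [AddCommGroup M] [Module R M] : Prop := γ.obj M = ⊤

lemma isT_of_surjective {M N : Type u} [AddCommGroup M] [Module R M] [AddCommGroup N]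
    [Module R N] (f : M →ₗ[R] N) (hf : Function.Surjective f) (h : IsT γ M) : IsT γ N := by
  have h2 := γ.map_le f
  rw [h, Submodule.map_top, LinearMap.range_eq_top.mpr hf] at h2
  exact top_le_iff.mp h2

lemma isT_equiv {M N : Type u} [AddCommGroup M] [Module R M] [AddCommGroup N]
    [Module R N] (e : M ≃ₗ[R] N) (h : IsT γ M) : IsT γ N :=
  isT_of_surjective e.toLinearMap e.surjective h

lemma isT_subsingleton {M : Type u} [AddCommGroup M] [Module R M] [Subsingleton M] :
    IsT γ M := by
  rw [IsT, Submodule.eq_top_iff']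
  intro x
  rw [Subsingleton.elim x 0]
  exact zero_mem _

lemma map_subtype_gamma_congr {M : Type u} [AddCommGroup M] [Module R M]
    {N P : Submodule R M} (e : N = P) :
    (γ.obj ↥N).map N.subtype = (γ.obj ↥P).map P.subtype := by subst e; rfl

/-- The hereditary property of a left exact preradical. -/
lemma hered (hle : γ.IsLeftExact) {M : Type u} [AddCommGroup M] [Module R M]
    (N : Submodule R M) : (γ.obj ↥N).map N.subtype = γ.obj M ⊓ N := by
  have h := hle N.mkQ
  rw [map_subtype_gamma_congr (N.ker_mkQ).symm]
  exact h.trans (by rw [Submodule.ker_mkQ])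

lemma isT_of_le (hle : γ.IsLeftExact) {M : Type u} [AddCommGroup M] [Module R M]
    {N : Submodule R M} (hN : N ≤ γ.obj M) : IsT γ ↥N := by
  have h := hered hle N
  have h' : Submodule.map N.subtype (γ.obj ↥N) = Submodule.map N.subtype ⊤ := by
    rw [h, Submodule.map_subtype_top]
    exact inf_eq_right.mpr hN
  exact Submodule.map_injective_of_injective N.injective_subtype h'

lemma le_gamma_of_isT {M : Type u} [AddCommGroup M] [Module R M]
    {N : Submodule R M} (h : IsT γ ↥N) : N ≤ γ.obj M := by
  have h2 := γ.map_le N.subtype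
  rwa [h, Submodule.map_subtype_top] at h2

lemma mapQ_le_surjective {M : Type u} [AddCommGroup M] [Module R M]
    {N P : Submodule R M} (h : N ≤ P) :
    Function.Surjective (Submodule.mapQ N P LinearMap.id h) := by
  intro z
  obtain ⟨y, rfl⟩ := Submodule.mkQ_surjective _ z
  exact ⟨N.mkQ y, by simp [Submodule.mapQ_apply]⟩

/-- Torsion modules are closed under extensions, by the radical property. -/
lemma isT_extension (hrad : γ.IsRadical) {M : Type u} [AddCommGroup M] [Module R M]
    (N : Submodule R M) (h1 : IsT γ ↥N) (h2 : IsT γ (M ⧸ N)) : IsT γ M := by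
  have hN : N ≤ γ.obj M := le_gamma_of_isT h1
  have h3 : IsT γ (M ⧸ γ.obj M) :=
    isT_of_surjective _ (mapQ_le_surjective hN) h2
  have h4 : (⊤ : Submodule R (M ⧸ γ.obj M)) = ⊥ := by rw [← h3, hrad]
  have h5 : Subsingleton (M ⧸ γ.obj M) := by
    constructor
    intro a b
    have ha : a - b ∈ (⊥ : Submodule R (M ⧸ γ.obj M)) := h4 ▸ Submodule.mem_top
    have h6 := Submodule.mem_bot (R := R) |>.mp ha
    exact sub_eq_zero.mp h6
  exact Submodule.Quotient.subsingleton_iff.mp h5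

lemma isT_quot_mono {A B : Ideal R} (hAB : A ≤ B) (h : IsT γ (R ⧸ A)) : IsT γ (R ⧸ B) :=
  isT_of_surjective _ (mapQ_le_surjective hAB) h

/-- `R ⧸ ann(x) ≃ R∙x`. -/
noncomputable def cycEquiv {M : Type u} [AddCommGroup M] [Module R M] (x : M) :
    (R ⧸ LinearMap.ker (LinearMap.toSpanSingleton R M x)) ≃ₗ[R] ↥(Submodule.span R {x}) :=
  (LinearMap.quotKerEquivRange _).trans
    (LinearEquiv.ofEq _ _ (LinearMap.span_singleton_eq_range R M x).symm)

lemma mem_gamma_iff_cyclic (hle : γ.IsLeftExact) {M : Type u} [AddCommGroup M]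
    [Module R M] (x : M) :
    x ∈ γ.obj M ↔ IsT γ (R ⧸ LinearMap.ker (LinearMap.toSpanSingleton R M x)) := by
  constructor
  · intro hx
    have h1 : Submodule.span R {x} ≤ γ.obj M :=
      Submodule.span_le.mpr (Set.singleton_subset_iff.mpr hx)
    exact isT_equiv (cycEquiv x).symm (isT_of_le hle h1)
  · intro h
    have h2 : IsT γ ↥(Submodule.span R {x}) := isT_equiv (cycEquiv x) h
    exact le_gamma_of_isT h2 (Submodule.mem_span_singleton_self x)

/-- Over a noetherian ring, every minimal prime over an ideal `A` is of the form
`(A : t)` for some `t`. -/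
lemma exists_colon_eq [IsNoetherianRing R] {A p : Ideal R} (hmin : p ∈ A.minimalPrimes) :
    ∃ t : R, t ∉ A ∧ ∀ s : R, s * t ∈ A ↔ s ∈ p := by
  classical
  obtain ⟨⟨hp, hAp⟩, hminimal⟩ := hmin
  have h1p : (1 : R) ∉ p := fun h => hp.ne_top ((Ideal.eq_top_iff_one p).mpr h)
  -- the saturation of `A` at `p`
  let B : Ideal R :=
    { carrier := {x | ∃ s, s ∉ p ∧ s * x ∈ A}
      add_mem' := by
        rintro a b ⟨s, hs, hsa⟩ ⟨t, ht, htb⟩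
        refine ⟨s * t, fun hst => (hp.mem_or_mem hst).elim hs ht, ?_⟩
        have h : s * t * (a + b) = t * (s * a) + s * (t * b) := by ring
        rw [h]
        exact A.add_mem (A.mul_mem_left _ hsa) (A.mul_mem_left _ htb)
      zero_mem' := ⟨1, h1p, by simpa using A.zero_mem⟩
      smul_mem' := by
        rintro c x ⟨s, hs, hsx⟩
        refine ⟨s, hs, ?_⟩
        have h : s * (c • x) = c * (s * x) := by
          simp only [smul_eq_mul]; ring
        rw [h]; exact A.mul_mem_left _ hsx }
  have hmemB : ∀ x : R, x ∈ B ↔ ∃ s, s ∉ p ∧ s * x ∈ A := fun x => Iff.rfl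
  -- `p` is contained in the radical of `B`
  have hrad : ∀ x ∈ p, ∃ n : ℕ, x ^ n ∈ B := by
    intro x hx
    by_contra hcon
    push_neg at hcon
    let U : Submonoid R :=
      { carrier := {y | ∃ n : ℕ, ∃ s, s ∉ p ∧ y = x ^ n * s}
        one_mem' := ⟨0, 1, h1p, by ring⟩
        mul_mem' := by
          rintro a b ⟨n, s, hs, rfl⟩ ⟨m, t, ht, rfl⟩
          exact ⟨n + m, s * t, fun hst => (hp.mem_or_mem hst).elim hs ht, by ring⟩ }
    have hdisj : Disjoint (A : Set R) (U : Set R) := by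
      rw [Set.disjoint_left]
      rintro a haA ⟨n, s, hs, rfl⟩
      refine (hcon n) ⟨s, hs, ?_⟩
      rwa [mul_comm s (x ^ n)]
    obtain ⟨q, hq, hAq, hdisj2⟩ := A.exists_le_prime_disjoint U hdisj
    have hqp : q ≤ p := by
      intro y hy
      by_contra hyp
      exact Set.disjoint_left.mp hdisj2 hy ⟨0, y, hyp, by ring⟩
    have hpq : p ≤ q := hminimal ⟨hq, hAq⟩ hqp
    exact Set.disjoint_left.mp hdisj2 (hpq hx) ⟨1, 1, h1p, by ring⟩
  have hple : p ≤ B.radical := fun x hx => Ideal.mem_radical_iff.mpr (hrad x hx)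
  have hpfg : p.FG := IsNoetherian.noetherian p
  obtain ⟨n0, hn0⟩ := Ideal.exists_pow_le_of_le_radical_of_fg hple hpfg
  have hex : ∃ n, p ^ n ≤ B := ⟨n0, hn0⟩
  have hBne : ∀ m : ℕ, p ^ m ≤ B → m ≠ 0 := by
    intro m hm h0
    subst h0
    rw [pow_zero, Ideal.one_eq_top] at hm
    obtain ⟨s, hs, hsA⟩ := (hmemB 1).mp (hm Submodule.mem_top)
    rw [mul_one] at hsA
    exact hs (hAp hsA)
  let n := Nat.find hex
  have hn : p ^ n ≤ B := Nat.find_spec hex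
  have hnne : n ≠ 0 := hBne n hn
  obtain ⟨m, hm⟩ : ∃ m, n = m + 1 := ⟨n - 1, by omega⟩
  have hmnot : ¬ p ^ m ≤ B := Nat.find_min hex (by omega)
  have hexu : ∃ u ∈ p ^ m, u ∉ B := by
    by_contra hcc
    push_neg at hcc
    exact hmnot fun x hx => hcc x hx
  obtain ⟨u, humem, hu⟩ := hexu
  -- clear denominators
  have hclear : ∀ S : Finset R, (∀ g ∈ S, g ∈ B) → ∃ s, s ∉ p ∧ ∀ g ∈ S, s * g ∈ A := by
    intro S
    induction S using Finset.induction_on with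
    | empty => exact fun _ => ⟨1, h1p, by simp⟩
    | @insert a S' hnot IH =>
      intro hmem
      obtain ⟨s, hs, hsall⟩ := IH (fun g hg => hmem g (Finset.mem_insert_of_mem hg))
      obtain ⟨t, ht, hta⟩ := hmem a (Finset.mem_insert_self a S')
      refine ⟨s * t, fun h => (hp.mem_or_mem h).elim hs ht, ?_⟩
      intro g hg
      rcases Finset.mem_insert.mp hg with h1 | h1
      · subst h1
        have h2 : s * t * g = s * (t * g) := by ring
        rw [h2]; exact A.mul_mem_left _ hta
      · have h2 : s * t * g = t * (s * g) := by ring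
        rw [h2]; exact A.mul_mem_left _ (hsall g h1)
  obtain ⟨S, hS⟩ := IsNoetherian.noetherian (p ^ n)
  obtain ⟨s, hs, hsall⟩ := hclear S (fun g hg => hn (hS ▸ Submodule.subset_span hg))
  have hsA : ∀ y ∈ p ^ n, s * y ∈ A := by
    intro y hy
    rw [← hS] at hy
    refine Submodule.span_induction ?_ ?_ ?_ ?_ hy
    · intro g hg; exact hsall g hg
    · simpa using A.zero_mem
    · intro y1 y2 _ _ h1 h2; rw [mul_add]; exact A.add_mem h1 h2
    · intro c y1 _ h1
      have h : s * (c • y1) = c * (s * y1) := by simp only [smul_eq_mul]; ring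
      rw [h]
      exact A.mul_mem_left _ h1
  refine ⟨s * u, fun h => hu ⟨s, hs, h⟩, fun y => ⟨fun hyA => ?_, fun hyp => ?_⟩⟩
  · by_contra hynp
    refine hu ⟨y * s, fun h => (hp.mem_or_mem h).elim hynp hs, ?_⟩
    have h : y * s * u = y * (s * u) := by ring
    rw [h]; exact hyA
  · have h1 : u * y ∈ p ^ n := by
      rw [hm, pow_succ]
      exact Ideal.mul_mem_mul humem hyp
    have h2 := hsA _ h1
    have h : y * (s * u) = s * (u * y) := by ring
    rw [h]; exact h2

/-- If all prime quotients above `A` are torsion then `R ⧸ A` is torsion. -/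
lemma isT_quotient_of_primes [IsNoetherianRing R] (hle : γ.IsLeftExact)
    (hrad : γ.IsRadical) (A : Ideal R)
    (hA : ∀ q : Ideal R, q.IsPrime → A ≤ q → IsT γ (R ⧸ q)) : IsT γ (R ⧸ A) := by
  revert hA
  refine IsNoetherian.induction
    (P := fun A : Ideal R =>
      (∀ q : Ideal R, q.IsPrime → A ≤ q → IsT γ (R ⧸ q)) → IsT γ (R ⧸ A)) ?_ A
  clear A
  intro A IH hA
  by_cases htop : A = ⊤
  · subst htop
    have h5 : Subsingleton (R ⧸ (⊤ : Ideal R)) :=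
      Submodule.Quotient.subsingleton_iff.mpr rfl
    exact isT_subsingleton
  by_cases hprime : Ideal.IsPrime A
  · exact hA A hprime le_rfl
  rw [Ideal.isPrime_iff] at hprime
  push_neg at hprime
  obtain ⟨a, b, hab, ha, hb⟩ := hprime htop
  -- the image of `a` in `R ⧸ A`
  have hKdef : True := trivial
  set xa : R ⧸ A := A.mkQ a with hxa
  set K : Ideal R := LinearMap.ker (LinearMap.toSpanSingleton R (R ⧸ A) xa) with hK
  have hAK : A ≤ K := by
    intro c hc
    show LinearMap.toSpanSingleton R (R ⧸ A) xa c = 0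
    rw [LinearMap.toSpanSingleton_apply, hxa, ← map_smul, Submodule.mkQ_apply,
      Submodule.Quotient.mk_eq_zero]
    exact Ideal.mul_mem_right a A hc
  have hbK : b ∈ K := by
    show LinearMap.toSpanSingleton R (R ⧸ A) xa b = 0
    rw [LinearMap.toSpanSingleton_apply, hxa, ← map_smul, Submodule.mkQ_apply,
      Submodule.Quotient.mk_eq_zero]
    have h : b • a = a * b := by rw [smul_eq_mul, mul_comm]
    rw [h]; exact hab
  have hKgt : A < K := lt_of_le_of_ne hAK (fun h => hb (h ▸ hbK))
  have haA1 : a ∈ A ⊔ Submodule.span R {a} :=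
    (le_sup_right : Submodule.span R {a} ≤ _) (Submodule.mem_span_singleton_self a)
  have hA1gt : A < A ⊔ Submodule.span R {a} :=
    lt_of_le_of_ne le_sup_left (fun h => ha (h ▸ haA1))
  have hT1 : IsT γ (R ⧸ (A ⊔ Submodule.span R {a})) :=
    IH _ hA1gt (fun q hq hq2 => hA q hq (le_trans le_sup_left hq2))
  have hTK : IsT γ (R ⧸ K) :=
    IH _ hKgt (fun q hq hq2 => hA q hq (le_trans hAK hq2))
  -- the cyclic submodule generated by `xa`
  have hTspan : IsT γ ↥(Submodule.span R {xa}) := isT_equiv (cycEquiv xa) hTK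
  have hmap : (Submodule.span R {a}).map A.mkQ = Submodule.span R {xa} := by
    rw [Submodule.map_span, Set.image_singleton, hxa]
  have hTW : IsT γ ↥((Submodule.span R {a}).map A.mkQ) :=
    isT_equiv (LinearEquiv.ofEq _ _ hmap.symm) hTspan
  have hTQ : IsT γ ((R ⧸ A) ⧸ (Submodule.span R {a}).map A.mkQ) :=
    isT_equiv (Submodule.quotientQuotientEquivQuotientSup A (Submodule.span R {a})).symm hT1
  exact isT_extension hrad _ hTW hTQ

/-- The key stability lemma: if the cyclic module generated by `x` has essential
intersection-type approximations into `γ(M)`, then `x ∈ γ(M)`. -/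
lemma key_mem [IsNoetherianRing R] (hle : γ.IsLeftExact) (hrad : γ.IsRadical)
    {M : Type u} [AddCommGroup M] [Module R M] (x : M)
    (hess : ∀ z : M, z ∈ Submodule.span R {x} → z ≠ 0 →
      ∃ r : R, r • z ∈ γ.obj M ∧ r • z ≠ 0) :
    x ∈ γ.obj M := by
  by_cases hx0 : x = 0
  · subst hx0; exact zero_mem _
  rw [mem_gamma_iff_cyclic hle]
  apply isT_quotient_of_primes hle hrad
  intro q hq hAq
  haveI := hq
  obtain ⟨p, hpmin, hpq⟩ := Ideal.exists_minimalPrimes_le hAq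
  have hpprime : p.IsPrime := hpmin.1.1
  obtain ⟨t, htA, htiff⟩ := exists_colon_eq hpmin
  have hmemA : ∀ c : R, c ∈ LinearMap.ker (LinearMap.toSpanSingleton R M x) ↔ c • x = 0 := by
    intro c
    rw [LinearMap.mem_ker, LinearMap.toSpanSingleton_apply]
  have hz0 : t • x ≠ 0 := fun h => htA ((hmemA t).mpr h)
  obtain ⟨r, hrg, hr0⟩ :=
    hess (t • x) (Submodule.smul_mem _ t (Submodule.mem_span_singleton_self x)) hz0
  have hrp : r ∉ p := by
    intro hr
    apply hr0
    have h1 := (htiff r).mpr hr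
    have h2 := (hmemA (r * t)).mp h1
    rwa [smul_smul]
  have hsmul : ∀ s : R, s • (r • t • x) = (s * r * t) • x := by
    intro s
    rw [smul_smul, smul_smul]
  have hann : LinearMap.ker (LinearMap.toSpanSingleton R M (r • t • x)) = p := by
    ext s
    rw [LinearMap.mem_ker, LinearMap.toSpanSingleton_apply, hsmul s]
    constructor
    · intro h
      have h2 : s * r ∈ p := (htiff (s * r)).mp ((hmemA (s * r * t)).mpr h)
      exact (hpprime.mem_or_mem h2).resolve_right hrp
    · intro hsp
      have h2 : s * r ∈ p := Ideal.mul_mem_right r p hsp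
      exact (hmemA (s * r * t)).mp ((htiff (s * r)).mpr h2)
  have hwg : Submodule.span R {r • t • x} ≤ γ.obj M :=
    Submodule.span_le.mpr (Set.singleton_subset_iff.mpr hrg)
  have hTw : IsT γ ↥(Submodule.span R {r • t • x}) := isT_of_le hle hwg
  have hTker : IsT γ (R ⧸ LinearMap.ker (LinearMap.toSpanSingleton R M (r • t • x))) :=
    isT_equiv (cycEquiv (r • t • x)).symm hTw
  have hTp : IsT γ (R ⧸ p) := isT_equiv (Submodule.quotEquivOfEq _ _ hann) hTker
  exact isT_quot_mono hpq hTp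

end Stab

/-- Every left exact radical functor on `R`-Mod (`R` commutative noetherian) preserves
injectivity: if `I` is injective then `γ(I)` is injective. -/
theorem stmt10 [IsNoetherianRing R] (γ : Preradical R)
    (hle : γ.IsLeftExact) (hrad : γ.IsRadical)
    (I : Type u) [AddCommGroup I] [Module R I] (hI : Module.Injective R I) :
    Module.Injective R ↥(γ.obj I) := by
  classical
  -- Zorn: a maximal submodule `C` with `C ⊓ γ(I) = ⊥`
  have hzorn : ∃ C, (⊥ : Submodule R I) ≤ C ∧
      Maximal (· ∈ {C : Submodule R I | C ⊓ γ.obj I = ⊥}) C := by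
    apply zorn_le_nonempty₀
    · intro c hc hchain y hy
      refine ⟨sSup c, ?_, fun z hz => le_sSup hz⟩
      rw [Set.mem_setOf_eq, eq_bot_iff]
      intro v hv
      obtain ⟨hv1, hv2⟩ := Submodule.mem_inf.mp hv
      haveI : Nonempty c := ⟨⟨y, hy⟩⟩
      have hv1' : v ∈ ⨆ (D : c), (D : Submodule R I) := by
        rw [← sSup_eq_iSup']; exact hv1
      obtain ⟨⟨D, hD⟩, hvD⟩ := (Submodule.mem_iSup_of_directed _ hchain.directed).mp hv1'
      have hmem : v ∈ D ⊓ γ.obj I := Submodule.mem_inf.mpr ⟨hvD, hv2⟩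
      rw [hc hD] at hmem
      exact hmem
    · show (⊥ : Submodule R I) ⊓ γ.obj I = ⊥
      exact bot_inf_eq _
  obtain ⟨C, -, hCmax⟩ := hzorn
  have hCG : C ⊓ γ.obj I = ⊥ := hCmax.prop
  -- essentiality of the image of `γ(I)` in `I ⧸ C`
  have hess : ∀ y : I ⧸ C, y ≠ 0 →
      ∃ r : R, r • y ∈ (γ.obj I).map C.mkQ ∧ r • y ≠ 0 := by
    intro y hy
    obtain ⟨z, rfl⟩ := Submodule.mkQ_surjective C y
    have hzC : z ∉ C := fun h =>
      hy (by rwa [Submodule.mkQ_apply, Submodule.Quotient.mk_eq_zero])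
    have hlt : C < C ⊔ Submodule.span R {z} := by
      refine lt_of_le_of_ne le_sup_left (fun h => hzC ?_)
      rw [h]
      exact (le_sup_right : Submodule.span R {z} ≤ _) (Submodule.mem_span_singleton_self z)
    have hne : ¬ ((C ⊔ Submodule.span R {z}) ⊓ γ.obj I = ⊥) := hCmax.not_prop_of_gt hlt
    obtain ⟨w, hw, hw0⟩ : ∃ w, w ∈ (C ⊔ Submodule.span R {z}) ⊓ γ.obj I ∧ w ≠ 0 := by
      by_contra hcc
      push_neg at hcc
      refine hne (eq_bot_iff.mpr fun w hw => ?_)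
      rcases eq_or_ne w 0 with h0 | h0
      · rw [h0]; exact Submodule.zero_mem ⊥
      · exact absurd h0 (not_ne_iff.mpr (by_contra fun h' => h' (hcc w hw)))
    obtain ⟨hw1, hw2⟩ := Submodule.mem_inf.mp hw
    obtain ⟨c, hc, v, hv, hcv⟩ := Submodule.mem_sup.mp hw1
    obtain ⟨r, rfl⟩ := Submodule.mem_span_singleton.mp hv
    have hc0 : C.mkQ c = 0 := by
      rw [Submodule.mkQ_apply, Submodule.Quotient.mk_eq_zero]; exact hc
    have hπw : C.mkQ w = r • C.mkQ z := by
      rw [← hcv, map_add, map_smul, hc0, zero_add]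
    refine ⟨r, ?_, ?_⟩
    · rw [← hπw]
      exact Submodule.mem_map_of_mem hw2
    · rw [← hπw]
      intro h0
      rw [Submodule.mkQ_apply, Submodule.Quotient.mk_eq_zero] at h0
      have : w ∈ C ⊓ γ.obj I := Submodule.mem_inf.mpr ⟨h0, hw2⟩
      rw [hCG] at this
      exact hw0 ((Submodule.mem_bot R).mp this)
  -- the map `γ(I) → (γ(I)).map C.mkQ` is a bijection
  let φ : ↥(γ.obj I) →ₗ[R] ↥((γ.obj I).map C.mkQ) :=
    C.mkQ.restrict (fun x hx => Submodule.mem_map_of_mem hx)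
  have hφbij : Function.Bijective φ := by
    constructor
    · intro a b hab
      have h1 : C.mkQ (a : I) = C.mkQ (b : I) := congrArg Subtype.val hab
      rw [Submodule.mkQ_apply, Submodule.mkQ_apply] at h1
      have h2 : (a : I) - b ∈ C := (Submodule.Quotient.eq C).mp h1
      have h3 : (a : I) - b ∈ C ⊓ γ.obj I :=
        Submodule.mem_inf.mpr ⟨h2, sub_mem a.2 b.2⟩
      rw [hCG] at h3
      exact Subtype.ext (sub_eq_zero.mp ((Submodule.mem_bot R).mp h3))
    · rintro ⟨w', hw'⟩
      obtain ⟨g, hg, rfl⟩ := Submodule.mem_map.mp hw'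
      exact ⟨⟨g, hg⟩, rfl⟩
  let e := LinearEquiv.ofBijective φ hφbij
  let σ : ↥((γ.obj I).map C.mkQ) →ₗ[R] I := (γ.obj I).subtype ∘ₗ (e.symm : _ →ₗ[R] _)
  obtain ⟨h, hh⟩ := hI.out ((γ.obj I).map C.mkQ).subtype (Submodule.injective_subtype _) σ
  -- `h` restricted along `C.mkQ` retracts onto `γ(I)`
  have hret : ∀ w : I, w ∈ γ.obj I → h (C.mkQ w) = w := by
    intro w hw
    have h1 : C.mkQ w = ((γ.obj I).map C.mkQ).subtype ⟨C.mkQ w, Submodule.mem_map_of_mem hw⟩ :=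
      rfl
    rw [h1, hh]
    show ((e.symm ⟨C.mkQ w, Submodule.mem_map_of_mem hw⟩ : ↥(γ.obj I)) : I) = w
    have h2 : e ⟨w, hw⟩ = ⟨C.mkQ w, Submodule.mem_map_of_mem hw⟩ := rfl
    rw [← h2, LinearEquiv.symm_apply_apply]
  -- every element of the range of `h` lies in `γ(I)` (the stability argument)
  have hrange : ∀ y : I ⧸ C, h y ∈ γ.obj I := by
    intro y0
    apply Stab.key_mem hle hrad
    intro z hz hz0
    obtain ⟨s, rfl⟩ := Submodule.mem_span_singleton.mp hz
    have hy0 : s • y0 ≠ 0 := by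
      intro h0
      apply hz0
      rw [← map_smul, h0, map_zero]
    obtain ⟨r, hr1, hr2⟩ := hess (s • y0) hy0
    obtain ⟨w', hw', hweq⟩ := Submodule.mem_map.mp hr1
    have hkey : r • s • h y0 = w' := by
      rw [← map_smul, ← map_smul, ← hweq, hret w' hw']
    refine ⟨r, ?_, ?_⟩
    · rw [hkey]; exact hw'
    · rw [hkey]
      intro h0
      subst h0
      rw [map_zero] at hweq
      exact hr2 hweq.symm
  -- Baer's criterion for `γ(I)`
  apply Module.Baer.injective
  intro J f
  obtain ⟨g, hg⟩ := hI.out J.subtype (Submodule.injective_subtype J) ((γ.obj I).subtype ∘ₗ f)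
  let ρ : I →ₗ[R] ↥(γ.obj I) :=
    LinearMap.codRestrict (γ.obj I) (h ∘ₗ C.mkQ) (fun y => hrange (C.mkQ y))
  refine ⟨ρ ∘ₗ g, fun x hx => ?_⟩
  have h1 : g x = (((γ.obj I).subtype ∘ₗ f) ⟨x, hx⟩ : I) := hg ⟨x, hx⟩
  apply Subtype.ext
  show (h ∘ₗ C.mkQ) (g x) = ((f ⟨x, hx⟩ : ↥(γ.obj I)) : I)
  rw [h1]
  exact hret _ (f ⟨x, hx⟩).2
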